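/- Let G be a simple graph with maximum degree at most D, and let S and T be sets of vertices of G. Suppose every connected component of the subgraph of G induced by S has at most m vertices, and |T \ S| ≤ k with k ≥ 1. Then every connected component of the subgraph of G induced by S ∪ T either contains no vertex of T \ S and equals a connected component of the subgraph induced by S, or has at most k(1 + D·m) vertices. -/

import Mathlib

/-- Reachability inside a vertex subset `A`: `ReachIn G A v y` holds if there is a
path from `v` to `y` all of whose steps use edges of `G` with both endpoints in `A`.
For `v ∈ A`, the set `{y | ReachIn G A v y}` is the vertex set of the connected
component of `v` in the subgraph of `G` induced by `A`. -/
def ReachIn {V : Type*} (G : SimpleGraph V) (A : Set V) (v y : V) : Prop :=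
  Relation.ReflTransGen (fun a b => G.Adj a b ∧ a ∈ A ∧ b ∈ A) v y

lemma ReachIn.symm {V : Type*} {G : SimpleGraph V} {A : Set V} {v y : V}
    (h : ReachIn G A v y) : ReachIn G A y v :=
  (@Relation.ReflTransGen.symmetric _ _
    ⟨fun _ _ hab => ⟨hab.1.symm, hab.2.2, hab.2.1⟩⟩).symm _ _ h

lemma ReachIn.trans {V : Type*} {G : SimpleGraph V} {A : Set V} {u v y : V}
    (h : ReachIn G A u v) (h' : ReachIn G A v y) : ReachIn G A u y :=
  Relation.ReflTransGen.trans h h'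

lemma ncard_biUnion_le_mul {α β : Type*} [Fintype α] [Fintype β] (s : Set α)
    (f : α → Set β) (a b : ℕ) (hs : s.ncard ≤ a) (hf : ∀ i ∈ s, (f i).ncard ≤ b) :
    (⋃ i ∈ s, f i).ncard ≤ a * b := by
  classical
  have h1 : (⋃ i ∈ s, f i) = ↑(s.toFinset.biUnion fun i => (f i).toFinset) := by
    ext x; simp
  rw [h1, Set.ncard_coe_finset]
  calc (s.toFinset.biUnion fun i => (f i).toFinset).card ≤ s.toFinset.card * b :=
        Finset.card_biUnion_le_card_mul _ _ _ (fun i hi => by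
          rw [← Set.ncard_eq_toFinset_card']; exact hf i (Set.mem_toFinset.mp hi))
    _ ≤ a * b := Nat.mul_le_mul_right b (by rwa [Set.ncard_eq_toFinset_card'] at hs)

/-- Deterministic merging lemma.  Let `G` be a (finite) simple graph of maximum degree
at most `D`, and let `S`, `T` be vertex sets such that every component of the subgraph
induced by `S` has at most `m` vertices and `|T \ S| ≤ k` with `k ≥ 1`.  Then every
component of the subgraph induced by `S ∪ T` either contains no vertex of `T \ S`
and equals a component of the subgraph induced by `S`, or has at most `k(1 + D·m)`
vertices. -/
theorem merging_components {V : Type*} [Fintype V] (G : SimpleGraph V)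
    (D m k : ℕ) (hk : 1 ≤ k)
    (hD : ∀ x : V, Nat.card (G.neighborSet x) ≤ D)
    (S T : Set V)
    (hS : ∀ v ∈ S, Nat.card {y | ReachIn G S v y} ≤ m)
    (hT : Nat.card (T \ S : Set V) ≤ k) :
    ∀ v ∈ S ∪ T,
      ({y | ReachIn G (S ∪ T) v y} ∩ (T \ S) = ∅ ∧
          ∃ w ∈ S, {y | ReachIn G (S ∪ T) v y} = {y | ReachIn G S w y}) ∨
        Nat.card {y | ReachIn G (S ∪ T) v y} ≤ k * (1 + D * m) := by
  classical
  intro v hv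
  set C : Set V := {y | ReachIn G (S ∪ T) v y} with hC
  by_cases hcap : C ∩ (T \ S) = ∅
  · -- component avoids T \ S : it equals the S-component of v
    left
    refine ⟨hcap, ?_⟩
    have hmemC : ∀ y ∈ C, y ∈ S := by
      intro y hy
      have hyST : y ∈ S ∪ T := by
        rcases (Relation.ReflTransGen.cases_head hy.symm) with h | ⟨c, hc, _⟩
        · rw [h]; exact hv
        · exact hc.2.1
      by_contra hyS
      have : y ∈ C ∩ (T \ S) := ⟨hy, ⟨hyST.resolve_left hyS, hyS⟩⟩
      simp [hcap] at this
    have hvC : v ∈ C := Relation.ReflTransGen.refl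
    refine ⟨v, hmemC v hvC, ?_⟩
    ext y
    constructor
    · intro hy
      -- transport the path into S
      have : ∀ z, ReachIn G (S ∪ T) v z → ReachIn G S v z := by
        intro z hz
        induction hz with
        | refl => exact Relation.ReflTransGen.refl
        | @tail b c hb hbc ih =>
          exact Relation.ReflTransGen.tail ih
            ⟨hbc.1, hmemC b hb, hmemC c (Relation.ReflTransGen.tail hb hbc)⟩
      exact this y hy
    · intro hy
      exact Relation.ReflTransGen.mono
        (fun a b hab => ⟨hab.1, Or.inl hab.2.1, Or.inl hab.2.2⟩) _ _ hy
  · right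
    obtain ⟨t₀, ht₀C, ht₀⟩ := Set.nonempty_iff_ne_empty.mpr hcap
    -- key structural fact
    have key : ∀ y, ReachIn G (S ∪ T) y t₀ →
        y ∈ T \ S ∨ ∃ t, ReachIn G (S ∪ T) y t ∧ t ∈ T \ S ∧
          ∃ x, G.Adj t x ∧ x ∈ S ∧ ReachIn G S x y := by
      intro y hy
      induction hy using Relation.ReflTransGen.head_induction_on with
      | refl => exact Or.inl ht₀
      | @head a b hab hbt ih =>
        by_cases haS : a ∈ S
        · right
          by_cases hbS : b ∈ S
          · rcases ih with hbTS | ⟨t, hbt, htTS, x, hadj, hxS, hxb⟩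
            · exact absurd hbS hbTS.2
            · exact ⟨t, Relation.ReflTransGen.head hab hbt, htTS, x, hadj, hxS,
                hxb.trans (Relation.ReflTransGen.single ⟨hab.1.symm, hbS, haS⟩)⟩
          · have hbTS : b ∈ T \ S := ⟨hab.2.2.resolve_left hbS, hbS⟩
            exact ⟨b, Relation.ReflTransGen.single hab, hbTS, a, hab.1.symm, haS,
              Relation.ReflTransGen.refl⟩
        · exact Or.inl ⟨hab.2.1.resolve_left haS, haS⟩
    -- covering of C
    have hcover : C ⊆ (T \ S) ∪
        ⋃ t ∈ (T \ S), ⋃ x ∈ {x | G.Adj t x ∧ x ∈ S}, {z | ReachIn G S x z} := by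
      intro y hy
      have hyt₀ : ReachIn G (S ∪ T) y t₀ := (hy : ReachIn G (S ∪ T) v y).symm.trans ht₀C
      rcases key y hyt₀ with hyTS | ⟨t, _, htTS, x, hadj, hxS, hxy⟩
      · exact Or.inl hyTS
      · refine Or.inr ?_
        simp only [Set.mem_iUnion, Set.mem_setOf_eq]
        exact ⟨t, htTS, x, ⟨hadj, hxS⟩, hxy⟩
    -- counting
    rw [Nat.card_coe_set_eq]
    have hTS : (T \ S).ncard ≤ k := by rwa [← Nat.card_coe_set_eq]
    have hinner : ∀ t, (⋃ x ∈ {x | G.Adj t x ∧ x ∈ S}, {z | ReachIn G S x z}).ncard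
        ≤ D * m := by
      intro t
      refine ncard_biUnion_le_mul _ _ D m ?_ ?_
      · calc ({x | G.Adj t x ∧ x ∈ S}).ncard ≤ (G.neighborSet t).ncard :=
              Set.ncard_le_ncard (fun x hx => hx.1) (Set.toFinite _)
          _ ≤ D := by rw [← Nat.card_coe_set_eq]; exact hD t
      · intro x hx
        rw [← Nat.card_coe_set_eq]
        exact hS x hx.2
    calc C.ncard ≤ ((T \ S) ∪
          ⋃ t ∈ (T \ S), ⋃ x ∈ {x | G.Adj t x ∧ x ∈ S}, {z | ReachIn G S x z}).ncard :=
          Set.ncard_le_ncard hcover (Set.toFinite _)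
      _ ≤ (T \ S).ncard +
          (⋃ t ∈ (T \ S), ⋃ x ∈ {x | G.Adj t x ∧ x ∈ S}, {z | ReachIn G S x z}).ncard :=
          Set.ncard_union_le _ _
      _ ≤ k + k * (D * m) := by
          gcongr
          exact ncard_biUnion_le_mul _ _ k (D * m) hTS (fun t _ => hinner t)
      _ = k * (1 + D * m) := by ring
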